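/- If 𝐝 = (d_1, …, d_k; n) is a dimension vector with Σ_{i=1}^k d_i ≤ n+1, then 𝐝 is dense. -/

import Mathlib

noncomputable section

/-- Complex `n × d` matrices of rank `d`, with the subspace topology of the
Euclidean (product) topology on matrices. -/
def FullRankMatrices (n d : ℕ) : Type :=
  {A : Matrix (Fin n) (Fin d) ℂ // A.rank = d}

instance (n d : ℕ) : TopologicalSpace (FullRankMatrices n d) :=
  instTopologicalSpaceSubtype

/-- The Grassmannian `Gr(d; n)` of `d`-dimensional linear subspaces of `ℂ^n`. -/
def Gr (d n : ℕ) : Type :=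
  {U : Submodule ℂ (Fin n → ℂ) // Module.finrank ℂ U = d}

/-- The map sending a rank-`d` matrix to its column span. -/
def colSpan (n d : ℕ) : FullRankMatrices n d → Gr d n :=
  fun A => ⟨LinearMap.range A.1.mulVecLin, A.2⟩

/-- `Gr(d; n)` carries the quotient topology induced by the column-span map. -/
instance (d n : ℕ) : TopologicalSpace (Gr d n) :=
  TopologicalSpace.coinduced (colSpan n d) inferInstance

/-- The linear automorphism of `ℂ^n` associated to an element of `GL(n, ℂ)`. -/
def glEquiv {n : ℕ} (M : GL (Fin n) ℂ) : (Fin n → ℂ) ≃ₗ[ℂ] (Fin n → ℂ) :=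
  LinearMap.GeneralLinearGroup.generalLinearEquiv ℂ (Fin n → ℂ)
    (Matrix.GeneralLinearGroup.toLin M)

/-- The action of `GL(n, ℂ)` on the Grassmannian, `M • U = M(U)`. -/
def glAction {n d : ℕ} (M : GL (Fin n) ℂ) (U : Gr d n) : Gr d n :=
  ⟨U.1.map (glEquiv M).toLinearMap, by
    rw [LinearEquiv.finrank_map_eq]; exact U.2⟩

/-- A dimension vector, recorded as the list `[d_1, …, d_k]` of subspace dimensions
together with the ambient dimension `n`, is dense if some point of
`∏ᵢ Gr(dᵢ; n)` has dense orbit under the diagonal `GL(n, ℂ)`-action. -/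
def DenseDV (d : List ℕ) (n : ℕ) : Prop :=
  ∃ x : ∀ i : Fin d.length, Gr (d.get i) n,
    Dense {y : ∀ i : Fin d.length, Gr (d.get i) n |
      ∃ M : GL (Fin n) ℂ, (fun i => glAction M (x i)) = y}

end

noncomputable section
namespace DenseDVAux
open Set Submodule Module Matrix Polynomial

/-- general position: every n of the n+1 vectors are linearly independent (via determinants). -/
def GP (n : ℕ) (w : Fin (n+1) → Fin n → ℂ) : Prop :=
  ∀ j : Fin (n+1), (Matrix.of fun a l => w (j.succAbove l) a).det ≠ 0

lemma gp_li {n : ℕ} {w : Fin (n+1) → Fin n → ℂ} (hw : GP n w) (j : Fin (n+1)) :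
    LinearIndependent ℂ (fun l : Fin n => w (j.succAbove l)) := by
  have h := hw j
  rw [← isUnit_iff_ne_zero, ← Matrix.isUnit_iff_isUnit_det,
    ← Matrix.linearIndependent_cols_iff_isUnit] at h
  exact h

lemma gp_sub {n : ℕ} {w : Fin (n+1) → Fin n → ℂ} (hw : GP n w) {s : ℕ}
    (g : Fin s → Fin (n+1)) (hg : Function.Injective g) (hs : s ≤ n) :
    LinearIndependent ℂ (fun l => w (g l)) := by
  have hns : ¬ Function.Surjective g := by
    intro hsurj
    have := Fintype.card_le_of_surjective g hsurj
    simp only [Fintype.card_fin] at this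
    omega
  rw [Function.Surjective] at hns
  push_neg at hns
  obtain ⟨j, hj⟩ := hns
  choose g' hg' using fun l => Fin.exists_succAbove_eq (hj l)
  have hfact : (fun l => w (g l)) = (fun m => w (j.succAbove m)) ∘ g' := by
    funext l; simp [hg' l]
  rw [hfact]
  exact (gp_li hw j).comp g' (fun a b hab => hg (by rw [← hg' a, ← hg' b, hab]))

/-- the Vandermonde configuration, a concrete general-position tuple. -/
def vconf (n : ℕ) : Fin (n+1) → Fin n → ℂ := fun j a => ((j : ℕ) : ℂ) ^ (a : ℕ)

lemma gp_vconf (n : ℕ) : GP n (vconf n) := by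
  intro j
  have h : (Matrix.of fun a l => vconf n (j.succAbove l) a)
      = (Matrix.vandermonde fun l : Fin n => (((j.succAbove l : Fin (n+1)) : ℕ) : ℂ)).transpose := by
    ext a l
    simp [vconf, Matrix.vandermonde, Matrix.transpose]
  rw [h, Matrix.det_transpose, Matrix.det_vandermonde_ne_zero_iff]
  intro a b hab
  apply Fin.succAbove_right_injective (p := j)
  apply Fin.ext
  have hab' : (((j.succAbove a : Fin (n+1)) : ℕ) : ℂ) = (((j.succAbove b : Fin (n+1)) : ℕ) : ℂ) := hab
  exact_mod_cast hab'

lemma repr_ne_zero {n : ℕ} {w : Fin (n+1) → Fin n → ℂ} (hw : GP n w)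
    (b : Basis (Fin n) ℂ (Fin n → ℂ)) (hb : ∀ l, b l = w (Fin.castSucc l)) (l : Fin n) :
    b.repr (w (Fin.last n)) l ≠ 0 := by
  intro h0
  set j0 := Fin.castSucc l with hj0
  have li := gp_li hw j0
  have hlast_ne : Fin.last n ≠ j0 := (Fin.castSucc_lt_last l).ne'
  obtain ⟨m0, hm0⟩ := Fin.exists_succAbove_eq hlast_ne
  have hmem : w (Fin.last n) ∈ span ℂ ((fun m => w (j0.succAbove m)) '' {m0}ᶜ) := by
    have hsum : w (Fin.last n)
        = ∑ l' ∈ Finset.univ.erase l, b.repr (w (Fin.last n)) l' • b l' := by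
      conv_lhs => rw [← b.sum_repr (w (Fin.last n))]
      rw [← Finset.add_sum_erase _ _ (Finset.mem_univ l), h0, zero_smul, zero_add]
    rw [hsum]
    apply Submodule.sum_mem
    intro l' hl'
    apply Submodule.smul_mem
    apply Submodule.subset_span
    have hne : Fin.castSucc l' ≠ j0 := by
      rw [hj0, Ne, Fin.castSucc_inj]
      exact Finset.ne_of_mem_erase hl'
    obtain ⟨m', hm'⟩ := Fin.exists_succAbove_eq hne
    refine ⟨m', ?_, ?_⟩
    · simp only [mem_compl_iff, mem_singleton_iff]
      intro hcon
      rw [hcon, hm0] at hm'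
      exact (Fin.castSucc_lt_last l').ne hm'.symm
    · rw [hb l']
      exact congrArg w hm'
  have hnm := li.notMem_span_image (s := ({m0}ᶜ : Set (Fin n)))
    (show m0 ∉ ({m0}ᶜ : Set (Fin n)) by simp)
  rw [hm0] at hnm
  exact hnm hmem

lemma exists_glEquiv {n : ℕ} (hn : 0 < n) {v w : Fin (n+1) → Fin n → ℂ}
    (hv : GP n v) (hw : GP n w) :
    ∃ (e : (Fin n → ℂ) ≃ₗ[ℂ] (Fin n → ℂ)) (lam : Fin (n+1) → ℂ),
      (∀ j, lam j ≠ 0) ∧ ∀ j, e (v j) = lam j • w j := by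
  haveI : Nonempty (Fin n) := ⟨⟨0, hn⟩⟩
  have cardeq : Fintype.card (Fin n) = finrank ℂ (Fin n → ℂ) := by
    simp [Module.finrank_fin_fun]
  have liv : LinearIndependent ℂ (fun l : Fin n => v (Fin.castSucc l)) := by
    have h := gp_li hv (Fin.last n)
    simpa [Fin.succAbove_last] using h
  have liw : LinearIndependent ℂ (fun l : Fin n => w (Fin.castSucc l)) := by
    have h := gp_li hw (Fin.last n)
    simpa [Fin.succAbove_last] using h
  let bv := basisOfLinearIndependentOfCardEqFinrank liv cardeq
  let bw := basisOfLinearIndependentOfCardEqFinrank liw cardeq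
  have bv_apply : ∀ l, bv l = v (Fin.castSucc l) := fun l =>
    congrFun (coe_basisOfLinearIndependentOfCardEqFinrank liv cardeq) l
  have bw_apply : ∀ l, bw l = w (Fin.castSucc l) := fun l =>
    congrFun (coe_basisOfLinearIndependentOfCardEqFinrank liw cardeq) l
  set cv := bv.repr (v (Fin.last n)) with hcv_def
  set cw := bw.repr (w (Fin.last n)) with hcw_def
  have hcv : ∀ l, cv l ≠ 0 := repr_ne_zero hv bv bv_apply
  have hcw : ∀ l, cw l ≠ 0 := repr_ne_zero hw bw bw_apply
  set coef : Fin n → ℂ := fun l => cw l / cv l with hcoef_def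
  have hcoefu : ∀ l, IsUnit (coef l) := fun l =>
    isUnit_iff_ne_zero.mpr (div_ne_zero (hcw l) (hcv l))
  let bw' := bw.isUnitSMul hcoefu
  let e := bv.equiv bw' (Equiv.refl _)
  have he : ∀ l, e (bv l) = coef l • bw l := by
    intro l
    rw [Basis.equiv_apply, Equiv.refl_apply]
    exact Basis.isUnitSMul_apply hcoefu l
  refine ⟨e, Fin.lastCases 1 coef, ?_, ?_⟩
  · intro j
    induction j using Fin.lastCases with
    | last => simp
    | cast l => simpa using isUnit_iff_ne_zero.mp (hcoefu l)
  · intro j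
    induction j using Fin.lastCases with
    | cast l =>
      simp only [Fin.lastCases_castSucc]
      rw [← bv_apply l, he l, bw_apply l]
    | last =>
      simp only [Fin.lastCases_last]
      rw [one_smul]
      have hv_sum : v (Fin.last n) = ∑ l, cv l • bv l := (bv.sum_repr _).symm
      have hw_sum : w (Fin.last n) = ∑ l, cw l • bw l := (bw.sum_repr _).symm
      rw [hv_sum, map_sum, hw_sum]
      congr 1
      funext l
      rw [_root_.map_smul, he l, smul_smul, hcoef_def]
      rw [mul_comm, div_mul_cancel₀ _ (hcv l)]

lemma exists_GL {n : ℕ} (e : (Fin n → ℂ) ≃ₗ[ℂ] (Fin n → ℂ)) :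
    ∃ M : GL (Fin n) ℂ, glEquiv M = e :=
  ⟨Matrix.GeneralLinearGroup.toLin.symm
    ((LinearMap.GeneralLinearGroup.generalLinearEquiv ℂ (Fin n → ℂ)).symm e), by
      unfold glEquiv
      rw [MulEquiv.apply_symm_apply, MulEquiv.apply_symm_apply]⟩

lemma span_smul_eq {n : ℕ} {ι : Type*} (f : ι → Fin n → ℂ) (lam : ι → ℂ)
    (h : ∀ i, lam i ≠ 0) :
    span ℂ (range fun i => lam i • f i) = span ℂ (range f) := by
  apply le_antisymm <;> rw [span_le] <;> rintro x ⟨i, rfl⟩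
  · exact smul_mem _ _ (subset_span ⟨i, rfl⟩)
  · have hx : f i = (lam i)⁻¹ • (lam i • f i) := by
      rw [smul_smul, inv_mul_cancel₀ (h i), one_smul]
    rw [hx]
    exact smul_mem _ _ (subset_span ⟨i, rfl⟩)
section Emb
variable {k : ℕ} (d : Fin k → ℕ)

def off (i : Fin k) : ℕ := ∑ j ∈ Finset.univ.filter (fun j => j < i), d j

lemma off_insert (i : Fin k) :
    off d i + d i = ∑ j ∈ insert i (Finset.univ.filter fun j => j < i), d j := by
  rw [Finset.sum_insert (by simp), off, add_comm]

lemma off_add_le (i : Fin k) : off d i + d i ≤ ∑ j, d j := by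
  rw [off_insert]
  exact Finset.sum_le_sum_of_subset (Finset.subset_univ _)

lemma off_mono {i i' : Fin k} (h : i < i') : off d i + d i ≤ off d i' := by
  rw [off_insert]
  apply Finset.sum_le_sum_of_subset
  intro j hj
  simp only [Finset.mem_insert, Finset.mem_filter, Finset.mem_univ, true_and] at hj ⊢
  rcases hj with rfl | hj
  · exact h
  · exact hj.trans h

variable {n : ℕ} (hsum : ∑ i, d i ≤ n + 1)

def emb (i : Fin k) (l : Fin (d i)) : Fin (n+1) :=
  ⟨off d i + l, by
    have h1 := off_add_le d i
    have h2 := l.isLt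
    omega⟩

lemma emb_inj_sigma {i i' : Fin k} {l : Fin (d i)} {l' : Fin (d i')}
    (h : emb d hsum i l = emb d hsum i' l') :
    (⟨i, l⟩ : Σ i, Fin (d i)) = ⟨i', l'⟩ := by
  have hval : off d i + (l : ℕ) = off d i' + (l' : ℕ) := congrArg Fin.val h
  have hii' : i = i' := by
    by_contra hne
    rcases lt_or_gt_of_ne hne with hlt | hlt
    · have h1 := off_mono d hlt
      have h2 := l.isLt
      omega
    · have h1 := off_mono d hlt
      have h2 := l'.isLt
      omega
  subst hii'
  have : l = l' := Fin.ext (by omega)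
  rw [this]

lemma emb_inj (i : Fin k) : Function.Injective (emb d hsum i) := by
  intro l l' h
  have h2 := emb_inj_sigma d hsum h
  exact Fin.ext (by simpa using congrArg (fun q : Σ i, Fin (d i) => (q.2 : ℕ)) h2)

end Emb
section Pt
variable {n k : ℕ} {d : Fin k → ℕ}

/-- the span of the i-th block of a general-position configuration, as a
point of the Grassmannian. -/
def pt {w : Fin (n+1) → Fin n → ℂ} (hw : GP n w) (hd : ∀ i, d i ≤ n)
    (hsum : ∑ i, d i ≤ n + 1) (i : Fin k) : Gr (d i) n :=
  ⟨span ℂ (range fun l : Fin (d i) => w (emb d hsum i l)), by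
    rw [finrank_span_eq_card (gp_sub hw _ (emb_inj d hsum i) (hd i))]
    simp⟩

lemma blockRank {w : Fin (n+1) → Fin n → ℂ} (hw : GP n w) (hd : ∀ i, d i ≤ n)
    (hsum : ∑ i, d i ≤ n + 1) (i : Fin k) :
    (Matrix.of fun (a : Fin n) (l : Fin (d i)) => w (emb d hsum i l) a).rank = d i := by
  rw [Matrix.rank, Matrix.range_mulVecLin]
  have ht : (Matrix.of fun (a : Fin n) (l : Fin (d i)) => w (emb d hsum i l) a).col
      = fun l => w (emb d hsum i l) := rfl
  rw [ht, finrank_span_eq_card (gp_sub hw _ (emb_inj d hsum i) (hd i))]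
  simp

lemma colSpan_block {w : Fin (n+1) → Fin n → ℂ} (hw : GP n w) (hd : ∀ i, d i ≤ n)
    (hsum : ∑ i, d i ≤ n + 1) (i : Fin k) :
    colSpan n (d i) ⟨Matrix.of fun a l => w (emb d hsum i l) a, blockRank hw hd hsum i⟩
      = pt hw hd hsum i := by
  apply Subtype.ext
  show LinearMap.range (Matrix.of fun a l => w (emb d hsum i l) a).mulVecLin = _
  rw [Matrix.range_mulVecLin]
  rfl

lemma act_eq (hn : 0 < n) {v w : Fin (n+1) → Fin n → ℂ} (hv : GP n v) (hw : GP n w)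
    (hd : ∀ i, d i ≤ n) (hsum : ∑ i, d i ≤ n + 1) :
    ∃ M : GL (Fin n) ℂ, ∀ i, glAction M (pt hv hd hsum i) = pt hw hd hsum i := by
  obtain ⟨e, lam, hlam, he⟩ := exists_glEquiv hn hv hw
  obtain ⟨M, hM⟩ := exists_GL e
  refine ⟨M, fun i => Subtype.ext ?_⟩
  show Submodule.map (glEquiv M).toLinearMap (pt hv hd hsum i).1 = (pt hw hd hsum i).1
  rw [hM]
  show Submodule.map e.toLinearMap
    (span ℂ (range fun l : Fin (d i) => v (emb d hsum i l))) = _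
  rw [Submodule.map_span, ← Set.range_comp]
  have hcomp : (e.toLinearMap ∘ fun l : Fin (d i) => v (emb d hsum i l))
      = fun l => lam (emb d hsum i l) • w (emb d hsum i l) := by
    funext l
    exact he (emb d hsum i l)
  rw [hcomp]
  exact span_smul_eq _ _ (fun l => hlam _)

lemma colSpan_surj (n d' : ℕ) : Function.Surjective (colSpan n d') := by
  intro U
  have : Module.Finite ℂ U.1 := inferInstance
  let b := Module.finBasisOfFinrankEq ℂ U.1 U.2
  have hrange : LinearMap.range (Matrix.of fun a l => (b l : Fin n → ℂ) a).mulVecLin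
      = U.1 := by
    rw [Matrix.range_mulVecLin]
    have ht : (Matrix.of fun a l => (b l : Fin n → ℂ) a).col
        = fun l => (b l : Fin n → ℂ) := rfl
    rw [ht]
    have hr : Set.range (fun l => (b l : Fin n → ℂ)) = U.1.subtype '' Set.range b := by
      rw [← Set.range_comp]
      rfl
    rw [hr, ← Submodule.map_span, b.span_eq, Submodule.map_subtype_top]
  refine ⟨⟨Matrix.of fun a l => (b l : Fin n → ℂ) a, ?_⟩, ?_⟩
  · rw [Matrix.rank, hrange]
    exact U.2
  · exact Subtype.ext hrange

end Pt
lemma dense_GP (n : ℕ) : Dense {w : Fin (n+1) → Fin n → ℂ | GP n w} := by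
  intro w0
  rw [_root_.mem_closure_iff]
  intro O hO hw0
  set u := vconf n with hu
  set q : Fin (n+1) → Matrix (Fin n) (Fin n) (Polynomial ℂ) := fun j => Matrix.of fun a l =>
    C (w0 (j.succAbove l) a) + X * C (u (j.succAbove l) a - w0 (j.succAbove l) a) with hq
  set p : Polynomial ℂ := ∏ j, (q j).det with hp
  set γ : ℂ → (Fin (n+1) → Fin n → ℂ) :=
    fun t j a => w0 j a + t * (u j a - w0 j a) with hγ
  have heval : ∀ (t : ℂ) (j : Fin (n+1)), Polynomial.eval t (q j).det
      = (Matrix.of fun a l => γ t (j.succAbove l) a).det := by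
    intro t j
    rw [← Polynomial.coe_evalRingHom, RingHom.map_det]
    congr 1
    ext a l
    simp [hq, hγ]
  have hγ1 : γ 1 = u := by
    funext j a
    simp [hγ]
  have hp1 : p.eval 1 ≠ 0 := by
    rw [hp, Polynomial.eval_prod, Finset.prod_ne_zero_iff]
    intro j _
    rw [heval 1 j, hγ1]
    exact gp_vconf n j
  have hpne : p ≠ 0 := fun h => hp1 (by simp [h])
  have hdense : Dense {t : ℂ | Polynomial.IsRoot p t}ᶜ :=
    Set.Countable.dense_compl ℂ (Polynomial.finite_setOf_isRoot hpne).countable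
  have hγcont : Continuous γ := by
    apply continuous_pi
    intro j
    apply continuous_pi
    intro a
    exact continuous_const.add (continuous_id.mul continuous_const)
  have h0mem : (0 : ℂ) ∈ γ ⁻¹' O := by
    have h0 : γ 0 = w0 := by funext j a; simp [hγ]
    simpa [h0] using hw0
  obtain ⟨t, ht, htO⟩ := hdense.exists_mem_open (hO.preimage hγcont) ⟨0, h0mem⟩
  refine ⟨γ t, htO, ?_⟩
  intro j
  have hev : Polynomial.eval t p ≠ 0 := ht
  rw [hp, Polynomial.eval_prod, Finset.prod_ne_zero_iff] at hev
  have := hev j (Finset.mem_univ j)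
  rwa [heval t j] at this

theorem main (n k : ℕ) (hn : 1 ≤ n) (d : Fin k → ℕ) (hd : ∀ i, d i ≤ n)
    (hsum : ∑ i, d i ≤ n + 1) :
    ∃ x : ∀ i : Fin k, Gr (d i) n,
      Dense {y : ∀ i : Fin k, Gr (d i) n |
        ∃ M : GL (Fin n) ℂ, (fun i => glAction M (x i)) = y} := by
  classical
  refine ⟨pt (gp_vconf n) hd hsum, ?_⟩
  rw [dense_iff_inter_open]
  rintro U hU ⟨y, hy⟩
  obtain ⟨I, O, hO, hsub⟩ := isOpen_pi_iff.mp hU y hy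
  choose A hA using fun i => colSpan_surj n (d i) (y i)
  have hW : ∀ i, ∃ Wi : Set (Matrix (Fin n) (Fin (d i)) ℂ), IsOpen Wi ∧ (A i).1 ∈ Wi ∧
      ∀ _ : i ∈ I, ∀ B : FullRankMatrices n (d i), B.1 ∈ Wi → colSpan n (d i) B ∈ O i := by
    intro i
    by_cases hi : i ∈ I
    · have hOop : IsOpen (colSpan n (d i) ⁻¹' (O i)) := isOpen_coinduced.mp (hO i hi).1
      obtain ⟨Wi, hWiop, hWipre⟩ := isOpen_induced_iff.mp hOop
      refine ⟨Wi, hWiop, ?_, ?_⟩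
      · have : A i ∈ colSpan n (d i) ⁻¹' (O i) := by
          simp only [Set.mem_preimage, hA i]
          exact (hO i hi).2
        rw [← hWipre] at this
        exact this
      · intro _ B hB
        have : B ∈ Subtype.val ⁻¹' Wi := hB
        have := (Set.ext_iff.mp hWipre B).mp this
        exact this
    · exact ⟨Set.univ, isOpen_univ, Set.mem_univ _, fun hi' => absurd hi' hi⟩
  choose W hWopen hWmem hWsub using hW
  set T : Set (Fin (n+1) → Fin n → ℂ) :=
    {w | ∀ i, (Matrix.of fun a l => w (emb d hsum i l) a) ∈ W i} with hT
  have hTopen : IsOpen T := by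
    have hTeq : T = ⋂ i, (fun w : Fin (n+1) → Fin n → ℂ =>
        (Matrix.of fun a l => w (emb d hsum i l) a)) ⁻¹' (W i) := by
      ext w; simp [hT]
    rw [hTeq]
    apply isOpen_iInter_of_finite
    intro i
    apply (hWopen i).preimage
    apply continuous_pi
    intro a
    apply continuous_pi
    intro l
    exact (continuous_apply a).comp (continuous_apply (emb d hsum i l))
  -- base point w0 assembled from the matrices A i
  set w0 : Fin (n+1) → Fin n → ℂ := fun j =>
    if h : ∃ q : Σ i, Fin (d i), emb d hsum q.1 q.2 = j then
      (fun a => (A (Classical.choose h).1).1 a (Classical.choose h).2) else 0 with hw0def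
  have hw0block : ∀ i, (Matrix.of fun a l => w0 (emb d hsum i l) a) = (A i).1 := by
    intro i
    ext a l
    have hex : ∃ q : Σ i', Fin (d i'), emb d hsum q.1 q.2 = emb d hsum i l := ⟨⟨i, l⟩, rfl⟩
    simp only [Matrix.of_apply, hw0def, dif_pos hex]
    have key : ∀ q : Σ i', Fin (d i'), emb d hsum q.1 q.2 = emb d hsum i l →
        (A q.1).1 a q.2 = (A i).1 a l := by
      rintro ⟨i0, l0⟩ hq
      cases emb_inj_sigma d hsum hq
      rfl
    exact key _ (Classical.choose_spec hex)
  have hw0T : w0 ∈ T := by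
    intro i
    rw [hw0block i]
    exact hWmem i
  obtain ⟨w, hwGP, hwT⟩ := (dense_GP n).exists_mem_open hTopen ⟨w0, hw0T⟩
  obtain ⟨M, hM⟩ := act_eq hn (gp_vconf n) hwGP hd hsum
  refine ⟨pt hwGP hd hsum, ?_, M, funext hM⟩
  apply hsub
  intro i hi
  rw [← colSpan_block hwGP hd hsum i]
  exact hWsub i hi _ (hwT i)

end DenseDVAux
end

/-- a dimension vector with total dimension at most `n + 1` is dense. -/
theorem dense_of_sum_le_succ (n k : ℕ) (hn : 1 ≤ n) (d : Fin k → ℕ)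
    (hd : ∀ i, d i ≤ n)
    (hsum : ∑ i, d i ≤ n + 1) :
    DenseDV (List.ofFn d) n := by
  have hd' : ∀ i : Fin (List.ofFn d).length, (List.ofFn d).get i ≤ n := by
    intro i
    rw [List.get_ofFn]
    exact hd _
  have hsum' : ∑ i : Fin (List.ofFn d).length, (List.ofFn d).get i ≤ n + 1 := by
    have heq : ∑ i : Fin (List.ofFn d).length, (List.ofFn d).get i = ∑ i, d i := by
      apply Fintype.sum_equiv (finCongr (List.length_ofFn (f := d)))
      intro i
      rw [List.get_ofFn]
      rfl
    rw [heq]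
    exact hsum
  exact DenseDVAux.main n (List.ofFn d).length hn (fun i => (List.ofFn d).get i) hd' hsum'
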